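/- arXiv:math/0203022 — 2 statements merged into one kernel-verified Lean document; each statement's English description precedes it below -/
import Mathlib

section
/- Let A₁B₃A₂B₁A₃B₂ be a hexagon inscribed in a conic in the real projective plane. For each permutation (i,j,k) of (1,2,3) let Q_{ij} be the intersection point of lines A_iB_k and B_jA_k. Then the three lines Q₁₂Q₂₁, Q₁₃Q₃₁, and Q₂₃Q₃₂ are concurrent. -/
/-- Collinearity of three points of the real projective plane,
given by homogeneous coordinate vectors in `ℝ³`. -/
def collin (u v w : Fin 3 → ℝ) : Prop :=
  Matrix.det (Matrix.of ![u, v, w]) = 0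

/-- `X` is the (well-defined) intersection point of the line through `u, v`
and the line through `w, z`. -/
def IsInter (u v w z X : Fin 3 → ℝ) : Prop :=
  X ≠ 0 ∧ LinearIndependent ℝ ![u, v] ∧ LinearIndependent ℝ ![w, z] ∧
    collin u v X ∧ collin w z X ∧ ¬ (collin u v w ∧ collin u v z)

/-- A point with homogeneous coordinates `v` lies on the conic determined by
the symmetric matrix `M`. -/
def OnConic (M : Matrix (Fin 3) (Fin 3) ℝ) (v : Fin 3 → ℝ) : Prop :=
  dotProduct v (M.mulVec v) = 0

noncomputable section PascalAux
open Matrix in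
lemma transpose_entry (M : Matrix (Fin 3) (Fin 3) ℝ) (hM : M.IsSymm) (i j : Fin 3) :
    M i j = M j i :=
  ((Matrix.transpose_apply M i j).symm.trans (congrFun (congrFun hM i) j)).symm


def cp (u v : Fin 3 → ℝ) : Fin 3 → ℝ :=
  ![u 1 * v 2 - u 2 * v 1, u 2 * v 0 - u 0 * v 2, u 0 * v 1 - u 1 * v 0]

def detv (u v w : Fin 3 → ℝ) : ℝ :=
  u 0 * v 1 * w 2 - u 0 * v 2 * w 1 - u 1 * v 0 * w 2 + u 1 * v 2 * w 0
    + u 2 * v 0 * w 1 - u 2 * v 1 * w 0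

lemma cp_zero (u v : Fin 3 → ℝ) : cp u v 0 = u 1 * v 2 - u 2 * v 1 := rfl
lemma cp_one (u v : Fin 3 → ℝ) : cp u v 1 = u 2 * v 0 - u 0 * v 2 := rfl
lemma cp_two (u v : Fin 3 → ℝ) : cp u v 2 = u 0 * v 1 - u 1 * v 0 := rfl

lemma det_of_rows (u v w : Fin 3 → ℝ) : Matrix.det (Matrix.of ![u, v, w]) = detv u v w := by
  rw [Matrix.det_fin_three]
  simp [detv]

lemma collin_iff (u v w : Fin 3 → ℝ) : collin u v w ↔ detv u v w = 0 := by
  rw [collin, det_of_rows]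


lemma pair_zero {u v : Fin 3 → ℝ} (hli : LinearIndependent ℝ ![u, v]) {a b : ℝ}
    (h : ∀ i, a * u i + b * v i = 0) : a = 0 ∧ b = 0 := by
  refine LinearIndependent.pair_iff.mp hli a b (funext fun i => ?_)
  simpa using h i

lemma exists_rep {u v q : Fin 3 → ℝ} (hli : LinearIndependent ℝ ![u, v])
    (hc : collin u v q) : ∃ s t : ℝ, ∀ i, q i = s * u i + t * v i := by
  obtain ⟨g, hg, hg0⟩ := Matrix.exists_vecMul_eq_zero_iff.mpr hc
  have hcomp : ∀ j, g 0 * u j + g 1 * v j + g 2 * q j = 0 := by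
    intro j
    have := congrFun hg0 j
    simpa [Matrix.vecMul, dotProduct, Fin.sum_univ_three] using this
  by_cases h2 : g 2 = 0
  · exfalso
    have hz := pair_zero hli (a := g 0) (b := g 1) (fun i => by
      have := hcomp i; rw [h2] at this; linarith)
    exact hg (funext fun i => by fin_cases i <;> simp [hz.1, hz.2, h2])
  · refine ⟨-g 0 / g 2, -g 1 / g 2, fun i => ?_⟩
    have := hcomp i
    rw [div_mul_eq_mul_div, div_mul_eq_mul_div, ← add_div, eq_div_iff h2]
    linear_combination this

lemma exists_smul_of_cp {a b : Fin 3 → ℝ} (h : ∀ i, cp a b i = 0) (ha : a ≠ 0) :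
    ∃ c : ℝ, ∀ i, b i = c * a i := by
  have h0 := h 0; have h1 := h 1; have h2 := h 2
  rw [cp_zero] at h0; rw [cp_one] at h1; rw [cp_two] at h2
  by_cases ha0 : a 0 = 0
  · by_cases ha1 : a 1 = 0
    · have ha2 : a 2 ≠ 0 := fun ha2 => ha (funext fun i => by fin_cases i <;> simp [ha0, ha1, ha2])
      refine ⟨b 2 / a 2, fun i => ?_⟩
      fin_cases i
      · show b 0 = b 2 / a 2 * a 0
        rw [div_mul_eq_mul_div, eq_div_iff ha2]; linear_combination h1
      · show b 1 = b 2 / a 2 * a 1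
        rw [div_mul_eq_mul_div, eq_div_iff ha2]; linear_combination -h0
      · show b 2 = b 2 / a 2 * a 2
        field_simp
    · refine ⟨b 1 / a 1, fun i => ?_⟩
      fin_cases i
      · show b 0 = b 1 / a 1 * a 0
        rw [div_mul_eq_mul_div, eq_div_iff ha1]; linear_combination -h2
      · show b 1 = b 1 / a 1 * a 1
        field_simp
      · show b 2 = b 1 / a 1 * a 2
        rw [div_mul_eq_mul_div, eq_div_iff ha1]; linear_combination h0
  · refine ⟨b 0 / a 0, fun i => ?_⟩
    fin_cases i
    · show b 0 = b 0 / a 0 * a 0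
      field_simp
    · show b 1 = b 0 / a 0 * a 1
      rw [div_mul_eq_mul_div, eq_div_iff ha0]; linear_combination h2
    · show b 2 = b 0 / a 0 * a 2
      rw [div_mul_eq_mul_div, eq_div_iff ha0]; linear_combination -h1


lemma bform_comm {M : Matrix (Fin 3) (Fin 3) ℝ} (hMsymm : M.IsSymm) (x y : Fin 3 → ℝ) :
    dotProduct x (M.mulVec y) = dotProduct y (M.mulVec x) := by
  have h01 : M 0 1 = M 1 0 := transpose_entry M hMsymm 0 1
  have h02 : M 0 2 = M 2 0 := transpose_entry M hMsymm 0 2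
  have h12 : M 1 2 = M 2 1 := transpose_entry M hMsymm 1 2
  simp only [dotProduct, Matrix.mulVec, Fin.sum_univ_three]
  linear_combination (x 0 * y 1 - x 1 * y 0) * h01 + (x 0 * y 2 - x 2 * y 0) * h02
    + (x 1 * y 2 - x 2 * y 1) * h12

open Matrix in
lemma AMAt_apply (A M : Matrix (Fin 3) (Fin 3) ℝ) (i j : Fin 3) :
    (A * M * Aᵀ) i j = dotProduct (A i) (M.mulVec (A j)) := by
  simp only [Matrix.mul_apply, Matrix.mulVec, dotProduct, Matrix.transpose_apply,
    Fin.sum_univ_three]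
  ring

lemma detv_mulVec (A : Matrix (Fin 3) (Fin 3) ℝ) (u v w : Fin 3 → ℝ) :
    detv (A.mulVec u) (A.mulVec v) (A.mulVec w) = A.det * detv u v w := by
  simp only [detv, Matrix.mulVec, dotProduct, Matrix.det_fin_three, Fin.sum_univ_three]
  ring

set_option maxHeartbeats 1000000 in
lemma cpcp_transform0 (S : Matrix (Fin 3) (Fin 3) ℝ) (u v w z : Fin 3 → ℝ) :
    cp (cp (S.mulVec u) (S.mulVec v)) (cp (S.mulVec w) (S.mulVec z)) 0
      = S.det * (S.mulVec (cp (cp u v) (cp w z))) 0 := by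
  simp only [cp_zero, cp_one, cp_two, Matrix.mulVec, dotProduct,
    Matrix.det_fin_three, Fin.sum_univ_three]
  ring

set_option maxHeartbeats 1000000 in
lemma cpcp_transform1 (S : Matrix (Fin 3) (Fin 3) ℝ) (u v w z : Fin 3 → ℝ) :
    cp (cp (S.mulVec u) (S.mulVec v)) (cp (S.mulVec w) (S.mulVec z)) 1
      = S.det * (S.mulVec (cp (cp u v) (cp w z))) 1 := by
  simp only [cp_zero, cp_one, cp_two, Matrix.mulVec, dotProduct,
    Matrix.det_fin_three, Fin.sum_univ_three]
  ring

set_option maxHeartbeats 1000000 in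
lemma cpcp_transform2 (S : Matrix (Fin 3) (Fin 3) ℝ) (u v w z : Fin 3 → ℝ) :
    cp (cp (S.mulVec u) (S.mulVec v)) (cp (S.mulVec w) (S.mulVec z)) 2
      = S.det * (S.mulVec (cp (cp u v) (cp w z))) 2 := by
  simp only [cp_zero, cp_one, cp_two, Matrix.mulVec, dotProduct,
    Matrix.det_fin_three, Fin.sum_univ_three]
  ring

lemma cpcp_transform (S : Matrix (Fin 3) (Fin 3) ℝ) (u v w z : Fin 3 → ℝ) (i : Fin 3) :
    cp (cp (S.mulVec u) (S.mulVec v)) (cp (S.mulVec w) (S.mulVec z)) i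
      = S.det * (S.mulVec (cp (cp u v) (cp w z))) i := by
  fin_cases i
  · exact cpcp_transform0 S u v w z
  · exact cpcp_transform1 S u v w z
  · exact cpcp_transform2 S u v w z

lemma detv_eq_cp_dot (u v x : Fin 3 → ℝ) :
    detv u v x = cp u v 0 * x 0 + cp u v 1 * x 1 + cp u v 2 * x 2 := by
  simp only [detv, cp_zero, cp_one, cp_two]
  ring

open Matrix in
lemma conic_indep {M : Matrix (Fin 3) (Fin 3) ℝ} (hMsymm : M.IsSymm) (hMdet : M.det ≠ 0)
    {u v w : Fin 3 → ℝ}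
    (honu : dotProduct u (M.mulVec u) = 0)
    (honv : dotProduct v (M.mulVec v) = 0)
    (honw : dotProduct w (M.mulVec w) = 0)
    (huv : LinearIndependent ℝ ![u, v]) (huw : LinearIndependent ℝ ![u, w])
    (hvw : LinearIndependent ℝ ![v, w]) : detv u v w ≠ 0 := by
  intro hd0
  obtain ⟨s, t, hw⟩ := exists_rep huv ((collin_iff u v w).mpr hd0)
  have hs : s ≠ 0 := by
    intro hs
    have hz := pair_zero hvw (a := t) (b := -1) (fun i => by
      have := hw i; rw [hs] at this; linarith)
    norm_num at hz
  have ht : t ≠ 0 := by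
    intro ht
    have hz := pair_zero huw (a := s) (b := -1) (fun i => by
      have := hw i; rw [ht] at this; linarith)
    norm_num at hz
  have h01 : M 0 1 = M 1 0 := transpose_entry M hMsymm 0 1
  have h02 : M 0 2 = M 2 0 := transpose_entry M hMsymm 0 2
  have h12 : M 1 2 = M 2 1 := transpose_entry M hMsymm 1 2
  have hBuv : dotProduct u (M.mulVec v) = 0 := by
    have hww := honw
    simp only [dotProduct, Matrix.mulVec, Fin.sum_univ_three] at hww honu honv ⊢
    simp only [hw] at hww
    simp only [h01, h02, h12] at hww honu honv ⊢
    have h2st : (2*s*t) ≠ 0 := mul_ne_zero (mul_ne_zero two_ne_zero hs) ht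
    apply mul_left_cancel₀ h2st
    rw [mul_zero]
    linear_combination hww - s^2 * honu - t^2 * honv
  have hBvu : dotProduct v (M.mulVec u) = 0 := by
    rw [bform_comm hMsymm]; exact hBuv
  have hune : u ≠ 0 := by have := huv.ne_zero 0; simpa using this
  have hcpne : cp u v ≠ 0 := by
    intro hcp
    obtain ⟨c, hc⟩ := exists_smul_of_cp (fun i => congrFun hcp i) hune
    have hz := pair_zero huv (a := c) (b := -1) (fun i => by have := hc i; linarith)
    norm_num at hz
  have hG : detv u v (cp u v) ≠ 0 := by
    intro hz
    apply hcpne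
    have e0 : detv u v (cp u v) = cp u v 0 ^ 2 + cp u v 1 ^ 2 + cp u v 2 ^ 2 := by
      simp only [detv, cp_zero, cp_one, cp_two]; ring
    rw [e0] at hz
    funext i
    fin_cases i
    · show cp u v 0 = 0
      nlinarith [sq_nonneg (cp u v 0), sq_nonneg (cp u v 1), sq_nonneg (cp u v 2)]
    · show cp u v 1 = 0
      nlinarith [sq_nonneg (cp u v 0), sq_nonneg (cp u v 1), sq_nonneg (cp u v 2)]
    · show cp u v 2 = 0
      nlinarith [sq_nonneg (cp u v 0), sq_nonneg (cp u v 1), sq_nonneg (cp u v 2)]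
  set G : Matrix (Fin 3) (Fin 3) ℝ := Matrix.of ![u, v, cp u v] with hGdef
  have hGdet : G.det ≠ 0 := by rw [hGdef, det_of_rows]; exact hG
  have hzero : (G * M * Gᵀ).det = 0 := by
    have e00 : (G * M * Gᵀ) 0 0 = 0 := by rw [AMAt_apply]; exact honu
    have e01 : (G * M * Gᵀ) 0 1 = 0 := by rw [AMAt_apply]; exact hBuv
    have e10 : (G * M * Gᵀ) 1 0 = 0 := by rw [AMAt_apply]; exact hBvu
    have e11 : (G * M * Gᵀ) 1 1 = 0 := by rw [AMAt_apply]; exact honv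
    rw [Matrix.det_fin_three, e00, e01, e10, e11]
    ring
  have hne : G.det * M.det * G.det ≠ 0 := mul_ne_zero (mul_ne_zero hGdet hMdet) hGdet
  apply hne
  rw [show G.det * M.det * G.det = (G * M * Gᵀ).det by
    rw [Matrix.det_mul, Matrix.det_mul, Matrix.det_transpose]]
  exact hzero


lemma dotmul_expand (M : Matrix (Fin 3) (Fin 3) ℝ) (x y : Fin 3 → ℝ) :
    dotProduct x (M.mulVec y)
      = x 0 * (M 0 0 * y 0 + M 0 1 * y 1 + M 0 2 * y 2)
      + x 1 * (M 1 0 * y 0 + M 1 1 * y 1 + M 1 2 * y 2)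
      + x 2 * (M 2 0 * y 0 + M 2 1 * y 1 + M 2 2 * y 2) := by
  simp [dotProduct, Matrix.mulVec, Fin.sum_univ_three]

lemma inter_rep {u v w z Q : Fin 3 → ℝ} (h : IsInter u v w z Q) :
    ∃ c : ℝ, c ≠ 0 ∧ ∀ i, Q i = c * cp (cp u v) (cp w z) i := by
  obtain ⟨hQ0, huv, hwz, hcuv, hcwz, hnot⟩ := h
  obtain ⟨s, t, hst⟩ := exists_rep huv hcuv
  have hdwz : detv w z Q = 0 := (collin_iff w z Q).mp hcwz
  simp only [detv] at hdwz
  rw [hst 0, hst 1, hst 2] at hdwz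
  have key0 : cp (cp (cp u v) (cp w z)) Q 0 = 0 := by
    simp only [cp_zero, cp_one, cp_two]
    rw [hst 1, hst 2]
    linear_combination (v 1 * u 2 - v 2 * u 1) * hdwz
  have key1 : cp (cp (cp u v) (cp w z)) Q 1 = 0 := by
    simp only [cp_zero, cp_one, cp_two]
    rw [hst 0, hst 2]
    linear_combination (v 2 * u 0 - v 0 * u 2) * hdwz
  have key2 : cp (cp (cp u v) (cp w z)) Q 2 = 0 := by
    simp only [cp_zero, cp_one, cp_two]
    rw [hst 0, hst 1]
    linear_combination (v 0 * u 1 - v 1 * u 0) * hdwz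
  have key : ∀ i, cp (cp (cp u v) (cp w z)) Q i = 0 := by
    intro i; fin_cases i
    exacts [key0, key1, key2]
  have hexp0 : cp (cp u v) (cp w z) 0 = detv u v z * w 0 - detv u v w * z 0 := by
    simp only [cp_zero, cp_one, cp_two, detv]; ring
  have hexp1 : cp (cp u v) (cp w z) 1 = detv u v z * w 1 - detv u v w * z 1 := by
    simp only [cp_zero, cp_one, cp_two, detv]; ring
  have hexp2 : cp (cp u v) (cp w z) 2 = detv u v z * w 2 - detv u v w * z 2 := by
    simp only [cp_zero, cp_one, cp_two, detv]; ring
  have hexp : ∀ i, cp (cp u v) (cp w z) i = detv u v z * w i - detv u v w * z i := by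
    intro i; fin_cases i
    exacts [hexp0, hexp1, hexp2]
  have hPne : cp (cp u v) (cp w z) ≠ 0 := by
    intro hP0
    have hz2 := pair_zero hwz (a := detv u v z) (b := -(detv u v w)) (fun i => by
      have h1 := hexp i
      have h2 : cp (cp u v) (cp w z) i = 0 := congrFun hP0 i
      rw [h2] at h1
      linarith)
    exact hnot ⟨(collin_iff u v w).mpr (by linarith [hz2.2]),
      (collin_iff u v z).mpr hz2.1⟩
  obtain ⟨c, hc⟩ := exists_smul_of_cp key hPne
  refine ⟨c, fun hc0 => hQ0 (funext fun i => by rw [hc i, hc0, zero_mul]; rfl), hc⟩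

end PascalAux

set_option maxHeartbeats 4000000
set_option maxRecDepth 100000

/-- **Generalized Pascal theorem.**  Let `A₁B₃A₂B₁A₃B₂` be a hexagon inscribed
in a nondegenerate conic, and for each permutation `(i,j,k)` of `(1,2,3)` let
`Q i j = A_iB_k ∩ B_jA_k`.  Then the lines `Q₁₂Q₂₁`, `Q₁₃Q₃₁`, `Q₂₃Q₃₂`
are concurrent. -/
theorem generalized_pascal
    (M : Matrix (Fin 3) (Fin 3) ℝ) (hMsymm : M.IsSymm) (hMdet : M.det ≠ 0)
    (A1 A2 A3 B1 B2 B3 Q12 Q21 Q13 Q31 Q23 Q32 : Fin 3 → ℝ)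
    (hA1 : A1 ≠ 0) (hA2 : A2 ≠ 0) (hA3 : A3 ≠ 0)
    (hB1 : B1 ≠ 0) (hB2 : B2 ≠ 0) (hB3 : B3 ≠ 0)
    (honA1 : OnConic M A1) (honA2 : OnConic M A2) (honA3 : OnConic M A3)
    (honB1 : OnConic M B1) (honB2 : OnConic M B2) (honB3 : OnConic M B3)
    (hdistinct : List.Pairwise (fun u v => LinearIndependent ℝ ![u, v])
      [A1, A2, A3, B1, B2, B3])
    (hQ12 : IsInter A1 B3 B2 A3 Q12)
    (hQ21 : IsInter A2 B3 B1 A3 Q21)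
    (hQ13 : IsInter A1 B2 B3 A2 Q13)
    (hQ31 : IsInter A3 B2 B1 A2 Q31)
    (hQ23 : IsInter A2 B1 B3 A1 Q23)
    (hQ32 : IsInter A3 B1 B2 A1 Q32)
    (hL1 : LinearIndependent ℝ ![Q12, Q21])
    (hL2 : LinearIndependent ℝ ![Q13, Q31])
    (hL3 : LinearIndependent ℝ ![Q23, Q32])
    (hL12 : ¬ (collin Q12 Q21 Q13 ∧ collin Q12 Q21 Q31))
    (hL13 : ¬ (collin Q12 Q21 Q23 ∧ collin Q12 Q21 Q32))
    (hL23 : ¬ (collin Q13 Q31 Q23 ∧ collin Q13 Q31 Q32)) :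
    ∃ X : Fin 3 → ℝ, X ≠ 0 ∧
      collin Q12 Q21 X ∧ collin Q13 Q31 X ∧ collin Q23 Q32 X := by
  simp only [List.pairwise_cons, List.mem_cons, List.not_mem_nil, List.mem_singleton,
    forall_eq_or_imp, forall_eq] at hdistinct
  obtain ⟨⟨h12, h13, -, -, -, -⟩, ⟨h23, -, -, -, -⟩, -⟩ := hdistinct
  have hRdet : detv A1 A2 A3 ≠ 0 := conic_indep hMsymm hMdet honA1 honA2 honA3 h12 h13 h23
  set R : Matrix (Fin 3) (Fin 3) ℝ := Matrix.of ![A1, A2, A3] with hRdef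
  have hRdetne : R.det ≠ 0 := by rw [hRdef, det_of_rows]; exact hRdet
  set T : Matrix (Fin 3) (Fin 3) ℝ := R.transpose with hTdef
  have hTdetne : T.det ≠ 0 := by rw [hTdef, Matrix.det_transpose]; exact hRdetne
  have hTunit : IsUnit T.det := isUnit_iff_ne_zero.mpr hTdetne
  obtain ⟨S, hST, hTS⟩ : ∃ S : Matrix (Fin 3) (Fin 3) ℝ, S * T = 1 ∧ T * S = 1 :=
    ⟨T⁻¹, Matrix.nonsing_inv_mul T hTunit, Matrix.mul_nonsing_inv T hTunit⟩
  have hSdetne : S.det ≠ 0 := by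
    intro h
    have h1 : S.det * T.det = 1 := by rw [← Matrix.det_mul, hST, Matrix.det_one]
    rw [h, zero_mul] at h1
    exact zero_ne_one h1
  have hTmul : ∀ x : Fin 3 → ℝ, T.mulVec (S.mulVec x) = x := fun x => by
    rw [Matrix.mulVec_mulVec, hTS, Matrix.one_mulVec]
  have hSmul : ∀ x : Fin 3 → ℝ, S.mulVec (T.mulVec x) = x := fun x => by
    rw [Matrix.mulVec_mulVec, hST, Matrix.one_mulVec]
  have hTe1 : T.mulVec ![(1:ℝ),0,0] = A1 := by
    funext j
    simp [hTdef, hRdef, Matrix.mulVec, dotProduct, Fin.sum_univ_three,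
      Matrix.transpose_apply, Matrix.vecHead, Matrix.vecTail]
  have hTe2 : T.mulVec ![(0:ℝ),1,0] = A2 := by
    funext j
    simp [hTdef, hRdef, Matrix.mulVec, dotProduct, Fin.sum_univ_three,
      Matrix.transpose_apply, Matrix.vecHead, Matrix.vecTail]
  have hTe3 : T.mulVec ![(0:ℝ),0,1] = A3 := by
    funext j
    simp [hTdef, hRdef, Matrix.mulVec, dotProduct, Fin.sum_univ_three,
      Matrix.transpose_apply, Matrix.vecHead, Matrix.vecTail]
  have hSA1 : S.mulVec A1 = ![(1:ℝ),0,0] := by rw [← hTe1]; exact hSmul _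
  have hSA2 : S.mulVec A2 = ![(0:ℝ),1,0] := by rw [← hTe2]; exact hSmul _
  have hSA3 : S.mulVec A3 = ![(0:ℝ),0,1] := by rw [← hTe3]; exact hSmul _
  -- expanded on-conic facts
  have honA1e := honA1; have honA2e := honA2; have honA3e := honA3
  have honB1e := honB1; have honB2e := honB2; have honB3e := honB3
  rw [OnConic] at honA1e honA2e honA3e honB1e honB2e honB3e
  simp only [dotProduct, Matrix.mulVec, Fin.sum_univ_three]
    at honA1e honA2e honA3e honB1e honB2e honB3e
  -- coordinates of B_i in the basis A1 A2 A3
  have hBcB1 : ∀ j, B1 j = S.mulVec B1 0 * A1 j + S.mulVec B1 1 * A2 j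
      + S.mulVec B1 2 * A3 j := by
    intro j
    have h := congrFun (hTmul B1) j
    rw [← h]
    simp [hTdef, hRdef, Matrix.mulVec, dotProduct, Fin.sum_univ_three,
      Matrix.transpose_apply, Matrix.vecHead, Matrix.vecTail]
    ring
  have hBcB2 : ∀ j, B2 j = S.mulVec B2 0 * A1 j + S.mulVec B2 1 * A2 j
      + S.mulVec B2 2 * A3 j := by
    intro j
    have h := congrFun (hTmul B2) j
    rw [← h]
    simp [hTdef, hRdef, Matrix.mulVec, dotProduct, Fin.sum_univ_three,
      Matrix.transpose_apply, Matrix.vecHead, Matrix.vecTail]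
    ring
  have hBcB3 : ∀ j, B3 j = S.mulVec B3 0 * A1 j + S.mulVec B3 1 * A2 j
      + S.mulVec B3 2 * A3 j := by
    intro j
    have h := congrFun (hTmul B3) j
    rw [← h]
    simp [hTdef, hRdef, Matrix.mulVec, dotProduct, Fin.sum_univ_three,
      Matrix.transpose_apply, Matrix.vecHead, Matrix.vecTail]
    ring
  have hlineB1 : (dotProduct A2 (M.mulVec A3) + dotProduct A3 (M.mulVec A2))
        * (S.mulVec B1 1 * S.mulVec B1 2)
      + (dotProduct A1 (M.mulVec A3) + dotProduct A3 (M.mulVec A1))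
        * (S.mulVec B1 0 * S.mulVec B1 2)
      + (dotProduct A1 (M.mulVec A2) + dotProduct A2 (M.mulVec A1))
        * (S.mulVec B1 0 * S.mulVec B1 1) = 0 := by
    have hB := honB1e
    rw [hBcB1 0, hBcB1 1, hBcB1 2] at hB
    rw [dotmul_expand M A2 A3, dotmul_expand M A3 A2, dotmul_expand M A1 A3,
      dotmul_expand M A3 A1, dotmul_expand M A1 A2, dotmul_expand M A2 A1]
    linear_combination hB - (S.mulVec B1 0) ^ 2 * honA1e - (S.mulVec B1 1) ^ 2 * honA2e
      - (S.mulVec B1 2) ^ 2 * honA3e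
  have hlineB2 : (dotProduct A2 (M.mulVec A3) + dotProduct A3 (M.mulVec A2))
        * (S.mulVec B2 1 * S.mulVec B2 2)
      + (dotProduct A1 (M.mulVec A3) + dotProduct A3 (M.mulVec A1))
        * (S.mulVec B2 0 * S.mulVec B2 2)
      + (dotProduct A1 (M.mulVec A2) + dotProduct A2 (M.mulVec A1))
        * (S.mulVec B2 0 * S.mulVec B2 1) = 0 := by
    have hB := honB2e
    rw [hBcB2 0, hBcB2 1, hBcB2 2] at hB
    rw [dotmul_expand M A2 A3, dotmul_expand M A3 A2, dotmul_expand M A1 A3,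
      dotmul_expand M A3 A1, dotmul_expand M A1 A2, dotmul_expand M A2 A1]
    linear_combination hB - (S.mulVec B2 0) ^ 2 * honA1e - (S.mulVec B2 1) ^ 2 * honA2e
      - (S.mulVec B2 2) ^ 2 * honA3e
  have hlineB3 : (dotProduct A2 (M.mulVec A3) + dotProduct A3 (M.mulVec A2))
        * (S.mulVec B3 1 * S.mulVec B3 2)
      + (dotProduct A1 (M.mulVec A3) + dotProduct A3 (M.mulVec A1))
        * (S.mulVec B3 0 * S.mulVec B3 2)
      + (dotProduct A1 (M.mulVec A2) + dotProduct A2 (M.mulVec A1))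
        * (S.mulVec B3 0 * S.mulVec B3 1) = 0 := by
    have hB := honB3e
    rw [hBcB3 0, hBcB3 1, hBcB3 2] at hB
    rw [dotmul_expand M A2 A3, dotmul_expand M A3 A2, dotmul_expand M A1 A3,
      dotmul_expand M A3 A1, dotmul_expand M A1 A2, dotmul_expand M A2 A1]
    linear_combination hB - (S.mulVec B3 0) ^ 2 * honA1e - (S.mulVec B3 1) ^ 2 * honA2e
      - (S.mulVec B3 2) ^ 2 * honA3e
  have habc : ¬((dotProduct A2 (M.mulVec A3) + dotProduct A3 (M.mulVec A2)) = 0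
      ∧ (dotProduct A1 (M.mulVec A3) + dotProduct A3 (M.mulVec A1)) = 0
      ∧ (dotProduct A1 (M.mulVec A2) + dotProduct A2 (M.mulVec A1)) = 0) := by
    rintro ⟨ha, hb, hc⟩
    have hRMR : R * M * R.transpose = 0 := by
      ext i j
      rw [AMAt_apply, Matrix.zero_apply]
      fin_cases i <;> fin_cases j
      · exact honA1
      · show dotProduct A1 (M.mulVec A2) = 0
        linarith [bform_comm hMsymm A1 A2]
      · show dotProduct A1 (M.mulVec A3) = 0
        linarith [bform_comm hMsymm A1 A3]
      · show dotProduct A2 (M.mulVec A1) = 0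
        linarith [bform_comm hMsymm A1 A2]
      · exact honA2
      · show dotProduct A2 (M.mulVec A3) = 0
        linarith [bform_comm hMsymm A2 A3]
      · show dotProduct A3 (M.mulVec A1) = 0
        linarith [bform_comm hMsymm A1 A3]
      · show dotProduct A3 (M.mulVec A2) = 0
        linarith [bform_comm hMsymm A2 A3]
      · exact honA3
    have h0 : (R * M * R.transpose).det = 0 := by rw [hRMR]; simp
    rw [Matrix.det_mul, Matrix.det_mul, Matrix.det_transpose] at h0
    exact mul_ne_zero (mul_ne_zero hRdetne hMdet) hRdetne h0
  have hCram_a : (- (S.mulVec B1 0) * (S.mulVec B1 1) * (S.mulVec B2 0) * (S.mulVec B2 2) * (S.mulVec B3 1) * (S.mulVec B3 2) + (S.mulVec B1 0) * (S.mulVec B1 1) * (S.mulVec B2 1) * (S.mulVec B2 2) * (S.mulVec B3 0) * (S.mulVec B3 2) + (S.mulVec B1 0) * (S.mulVec B1 2) * (S.mulVec B2 0) * (S.mulVec B2 1) * (S.mulVec B3 1) * (S.mulVec B3 2) - (S.mulVec B1 0) * (S.mulVec B1 2) * (S.mulVec B2 1) * (S.mulVec B2 2) * (S.mulVec B3 0)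 * (S.mulVec B3 1) - (S.mulVec B1 1) * (S.mulVec B1 2) * (S.mulVec B2 0) * (S.mulVec B2 1) * (S.mulVec B3 0) * (S.mulVec B3 2) + (S.mulVec B1 1) * (S.mulVec B1 2) * (S.mulVec B2 0) * (S.mulVec B2 2) * (S.mulVec B3 0) * (S.mulVec B3 1)) * (dotProduct A2 (M.mulVec A3) + dotProduct A3 (M.mulVec A2)) = 0 := by
    linear_combination (- (S.mulVec B2 0) * (S.mulVec B2 1) * (S.mulVec B3 0) * (S.mulVec B3 2) + (S.mulVec B2 0) * (S.mulVec B2 2) * (S.mulVec B3 0) * (S.mulVec B3 1)) * hlineB1 + ((S.mulVec B1 0) * (S.mulVec B1 1) * (S.mulVec B3 0) * (S.mulVec B3 2) - (S.mulVec B1 0) * (S.mulVec B1 2) * (S.mulVec B3 0) * (S.mulVec B3 1)) * hlineB2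
      + (- (S.mulVec B1 0) * (S.mulVec B1 1) * (S.mulVec B2 0) * (S.mulVec B2 2) + (S.mulVec B1 0) * (S.mulVec B1 2) * (S.mulVec B2 0) * (S.mulVec B2 1)) * hlineB3
  have hCram_b : (- (S.mulVec B1 0) * (S.mulVec B1 1) * (S.mulVec B2 0) * (S.mulVec B2 2) * (S.mulVec B3 1) * (S.mulVec B3 2) + (S.mulVec B1 0) * (S.mulVec B1 1) * (S.mulVec B2 1) * (S.mulVec B2 2) * (S.mulVec B3 0) * (S.mulVec B3 2) + (S.mulVec B1 0) * (S.mulVec B1 2) * (S.mulVec B2 0) * (S.mulVec B2 1) * (S.mulVec B3 1) * (S.mulVec B3 2) - (S.mulVec B1 0) * (S.mulVec B1 2) * (S.mulVec B2 1) * (S.mulVec B2 2) * (S.mulVec B3 0) * (S.mulVec B3 1) - (S.mulVec B1 1) * (S.mulVec B1 2) * (S.mulVec B2 0) * (S.mulVec B2 1) * (S.mulVec B3 0) * (S.mulVec B3 2) + (S.mulVec B1 1) * (S.mulVec B1 2) * (S.mulVec B2 0) * (S.mulVec B2 2) * (S.mulVec B3 0) * (S.mulVec B3 1)) * (dotProduct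 A1 (M.mulVec A3) + dotProduct A3 (M.mulVec A1)) = 0 := by
    linear_combination ((S.mulVec B2 0) * (S.mulVec B2 1) * (S.mulVec B3 1) * (S.mulVec B3 2) - (S.mulVec B2 1) * (S.mulVec B2 2) * (S.mulVec B3 0) * (S.mulVec B3 1)) * hlineB1 + (- (S.mulVec B1 0) * (S.mulVec B1 1) * (S.mulVec B3 1) * (S.mulVec B3 2) + (S.mulVec B1 1) * (S.mulVec B1 2) * (S.mulVec B3 0) * (S.mulVec B3 1)) * hlineB2
      + ((S.mulVec B1 0) * (S.mulVec B1 1) * (S.mulVec B2 1) * (S.mulVec B2 2) - (S.mulVec B1 1) * (S.mulVec B1 2) * (S.mulVec B2 0) * (S.mulVec B2 1)) * hlineB3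
  have hCram_c : (- (S.mulVec B1 0) * (S.mulVec B1 1) * (S.mulVec B2 0) * (S.mulVec B2 2) * (S.mulVec B3 1) * (S.mulVec B3 2) + (S.mulVec B1 0) * (S.mulVec B1 1) * (S.mulVec B2 1) * (S.mulVec B2 2) * (S.mulVec B3 0) * (S.mulVec B3 2) + (S.mulVec B1 0) * (S.mulVec B1 2) * (S.mulVec B2 0) * (S.mulVec B2 1) * (S.mulVec B3 1) * (S.mulVec B3 2) - (S.mulVec B1 0) * (S.mulVec B1 2) * (S.mulVec B2 1) * (S.mulVec B2 2) * (S.mulVec B3 0) * (S.mulVec B3 1) - (S.mulVec B1 1) * (S.mulVec B1 2) * (S.mulVec B2 0) * (S.mulVec B2 1) * (S.mulVec B3 0) * (S.mulVec B3 2) + (S.mulVec B1 1) * (S.mulVec B1 2) * (S.mulVec B2 0) * (S.mulVec B2 2) * (S.mulVec B3 0) * (S.mulVec B3 1)) * (dotProduct A1 (M.mulVec A2) + dotProduct A2 (M.mulVec A1)) = 0 := by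
    linear_combination (- (S.mulVec B2 0) * (S.mulVec B2 2) * (S.mulVec B3 1) * (S.mulVec B3 2) + (S.mulVec B2 1) * (S.mulVec B2 2) * (S.mulVec B3 0) * (S.mulVec B3 2)) * hlineB1 + ((S.mulVec B1 0) * (S.mulVec B1 2) * (S.mulVec B3 1) * (S.mulVec B3 2) - (S.mulVec B1 1) * (S.mulVec B1 2) * (S.mulVec B3 0) * (S.mulVec B3 2)) * hlineB2
      + (- (S.mulVec B1 0) * (S.mulVec B1 2) * (S.mulVec B2 1) * (S.mulVec B2 2) + (S.mulVec B1 1) * (S.mulVec B1 2) * (S.mulVec B2 0) * (S.mulVec B2 2)) * hlineB3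
  have hC : (- (S.mulVec B1 0) * (S.mulVec B1 1) * (S.mulVec B2 0) * (S.mulVec B2 2) * (S.mulVec B3 1) * (S.mulVec B3 2) + (S.mulVec B1 0) * (S.mulVec B1 1) * (S.mulVec B2 1) * (S.mulVec B2 2) * (S.mulVec B3 0) * (S.mulVec B3 2) + (S.mulVec B1 0) * (S.mulVec B1 2) * (S.mulVec B2 0) * (S.mulVec B2 1) * (S.mulVec B3 1) * (S.mulVec B3 2) - (S.mulVec B1 0) * (S.mulVec B1 2) * (S.mulVec B2 1) * (S.mulVec B2 2) * (S.mulVec B3 0) * (S.mulVec B3 1) - (S.mulVec B1 1) * (S.mulVec B1 2) * (S.mulVec B2 0) * (S.mulVec B2 1) * (S.mulVec B3 0) * (S.mulVec B3 2) + (S.mulVec B1 1) * (S.mulVec B1 2) * (S.mulVec B2 0) * (S.mulVec B2 2) * (S.mulVec B3 0) * (S.mulVec B3 1)) = (0:ℝ) := by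
    by_cases ha : (dotProduct A2 (M.mulVec A3) + dotProduct A3 (M.mulVec A2)) = 0
    · by_cases hb : (dotProduct A1 (M.mulVec A3) + dotProduct A3 (M.mulVec A1)) = 0
      · have hcne : ¬ (dotProduct A1 (M.mulVec A2) + dotProduct A2 (M.mulVec A1)) = 0 := fun h => habc ⟨ha, hb, h⟩
        exact (mul_eq_zero.mp hCram_c).resolve_right hcne
      · exact (mul_eq_zero.mp hCram_b).resolve_right hb
    · exact (mul_eq_zero.mp hCram_a).resolve_right ha
  obtain ⟨cQ12, hcQ12ne, hcQ12⟩ := inter_rep hQ12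
  have hnQ12 : ∀ i, S.mulVec Q12 i
      = (cQ12 / S.det) * cp (cp ![(1:ℝ),0,0] (S.mulVec B3)) (cp (S.mulVec B2) ![(0:ℝ),0,1]) i := by
    intro i
    have hstep : S.mulVec Q12 i = cQ12 * (S.mulVec (cp (cp A1 B3) (cp B2 A3))) i := by
      simp only [Matrix.mulVec, dotProduct, Fin.sum_univ_three]
      rw [hcQ12 0, hcQ12 1, hcQ12 2]
      ring
    have h2 := cpcp_transform S A1 B3 B2 A3 i
    simp only [hSA1, hSA2, hSA3] at h2
    rw [hstep, h2]
    field_simp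
  obtain ⟨cQ21, hcQ21ne, hcQ21⟩ := inter_rep hQ21
  have hnQ21 : ∀ i, S.mulVec Q21 i
      = (cQ21 / S.det) * cp (cp ![(0:ℝ),1,0] (S.mulVec B3)) (cp (S.mulVec B1) ![(0:ℝ),0,1]) i := by
    intro i
    have hstep : S.mulVec Q21 i = cQ21 * (S.mulVec (cp (cp A2 B3) (cp B1 A3))) i := by
      simp only [Matrix.mulVec, dotProduct, Fin.sum_univ_three]
      rw [hcQ21 0, hcQ21 1, hcQ21 2]
      ring
    have h2 := cpcp_transform S A2 B3 B1 A3 i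
    simp only [hSA1, hSA2, hSA3] at h2
    rw [hstep, h2]
    field_simp
  obtain ⟨cQ13, hcQ13ne, hcQ13⟩ := inter_rep hQ13
  have hnQ13 : ∀ i, S.mulVec Q13 i
      = (cQ13 / S.det) * cp (cp ![(1:ℝ),0,0] (S.mulVec B2)) (cp (S.mulVec B3) ![(0:ℝ),1,0]) i := by
    intro i
    have hstep : S.mulVec Q13 i = cQ13 * (S.mulVec (cp (cp A1 B2) (cp B3 A2))) i := by
      simp only [Matrix.mulVec, dotProduct, Fin.sum_univ_three]
      rw [hcQ13 0, hcQ13 1, hcQ13 2]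
      ring
    have h2 := cpcp_transform S A1 B2 B3 A2 i
    simp only [hSA1, hSA2, hSA3] at h2
    rw [hstep, h2]
    field_simp
  obtain ⟨cQ31, hcQ31ne, hcQ31⟩ := inter_rep hQ31
  have hnQ31 : ∀ i, S.mulVec Q31 i
      = (cQ31 / S.det) * cp (cp ![(0:ℝ),0,1] (S.mulVec B2)) (cp (S.mulVec B1) ![(0:ℝ),1,0]) i := by
    intro i
    have hstep : S.mulVec Q31 i = cQ31 * (S.mulVec (cp (cp A3 B2) (cp B1 A2))) i := by
      simp only [Matrix.mulVec, dotProduct, Fin.sum_univ_three]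
      rw [hcQ31 0, hcQ31 1, hcQ31 2]
      ring
    have h2 := cpcp_transform S A3 B2 B1 A2 i
    simp only [hSA1, hSA2, hSA3] at h2
    rw [hstep, h2]
    field_simp
  obtain ⟨cQ23, hcQ23ne, hcQ23⟩ := inter_rep hQ23
  have hnQ23 : ∀ i, S.mulVec Q23 i
      = (cQ23 / S.det) * cp (cp ![(0:ℝ),1,0] (S.mulVec B1)) (cp (S.mulVec B3) ![(1:ℝ),0,0]) i := by
    intro i
    have hstep : S.mulVec Q23 i = cQ23 * (S.mulVec (cp (cp A2 B1) (cp B3 A1))) i := by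
      simp only [Matrix.mulVec, dotProduct, Fin.sum_univ_three]
      rw [hcQ23 0, hcQ23 1, hcQ23 2]
      ring
    have h2 := cpcp_transform S A2 B1 B3 A1 i
    simp only [hSA1, hSA2, hSA3] at h2
    rw [hstep, h2]
    field_simp
  obtain ⟨cQ32, hcQ32ne, hcQ32⟩ := inter_rep hQ32
  have hnQ32 : ∀ i, S.mulVec Q32 i
      = (cQ32 / S.det) * cp (cp ![(0:ℝ),0,1] (S.mulVec B1)) (cp (S.mulVec B2) ![(1:ℝ),0,0]) i := by
    intro i
    have hstep : S.mulVec Q32 i = cQ32 * (S.mulVec (cp (cp A3 B1) (cp B2 A1))) i := by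
      simp only [Matrix.mulVec, dotProduct, Fin.sum_univ_three]
      rw [hcQ32 0, hcQ32 1, hcQ32 2]
      ring
    have h2 := cpcp_transform S A3 B1 B2 A1 i
    simp only [hSA1, hSA2, hSA3] at h2
    rw [hstep, h2]
    field_simp
  have hD : detv (cp (S.mulVec Q12) (S.mulVec Q21)) (cp (S.mulVec Q13) (S.mulVec Q31))
      (cp (S.mulVec Q23) (S.mulVec Q32)) = 0 := by
    simp only [detv, cp_zero, cp_one, cp_two]
    rw [hnQ12 0, hnQ12 1, hnQ12 2, hnQ21 0, hnQ21 1, hnQ21 2, hnQ13 0, hnQ13 1, hnQ13 2,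
      hnQ31 0, hnQ31 1, hnQ31 2, hnQ23 0, hnQ23 1, hnQ23 2, hnQ32 0, hnQ32 1, hnQ32 2]
    simp only [cp_zero, cp_one, cp_two, Matrix.cons_val_zero, Matrix.cons_val_one,
      Matrix.head_cons, Matrix.cons_val_two, Matrix.tail_cons]
    linear_combination ((cQ12 / S.det) * (cQ21 / S.det) * (cQ13 / S.det) * (cQ31 / S.det)
      * (cQ23 / S.det) * (cQ32 / S.det) * (- (S.mulVec B1 0) ^ 2 * (S.mulVec B2 1) ^ 2 * (S.mulVec B3 2) ^ 2 + (S.mulVec B1 0) * (S.mulVec B1 1) * (S.mulVec B2 1) * (S.mulVec B2 2) * (S.mulVec B3 0) * (S.mulVec B3 2) + (S.mulVec B1 0) * (S.mulVec B1 2) * (S.mulVec B2 0) * (S.mulVec B2 1) * (S.mulVec B3 1) * (S.mulVec B3 2) - (S.mulVec B1 1) * (S.mulVec B1 2) * (S.mulVec B2 0) * (S.mulVec B2 2) * (S.mulVec B3 0) * (S.mulVec B3 1))) * hC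
  have hKm : (Matrix.of ![cp (S.mulVec Q12) (S.mulVec Q21), cp (S.mulVec Q13) (S.mulVec Q31),
      cp (S.mulVec Q23) (S.mulVec Q32)]).det = 0 := by
    rw [det_of_rows]; exact hD
  obtain ⟨X', hX'ne, hX'0⟩ := Matrix.exists_mulVec_eq_zero_iff.mpr hKm
  have hd1 : detv (S.mulVec Q12) (S.mulVec Q21) X' = 0 := by
    have h := congrFun hX'0 0
    rw [detv_eq_cp_dot]
    simp only [Matrix.mulVec, dotProduct, Fin.sum_univ_three, Matrix.of_apply,
      Matrix.cons_val_zero, Matrix.cons_val_one, Matrix.head_cons, Matrix.cons_val_two,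
      Matrix.tail_cons, Pi.zero_apply] at h
    linear_combination h
  have hd2 : detv (S.mulVec Q13) (S.mulVec Q31) X' = 0 := by
    have h := congrFun hX'0 1
    rw [detv_eq_cp_dot]
    simp only [Matrix.mulVec, dotProduct, Fin.sum_univ_three, Matrix.of_apply,
      Matrix.cons_val_zero, Matrix.cons_val_one, Matrix.head_cons, Matrix.cons_val_two,
      Matrix.tail_cons, Pi.zero_apply] at h
    linear_combination h
  have hd3 : detv (S.mulVec Q23) (S.mulVec Q32) X' = 0 := by
    have h := congrFun hX'0 2
    rw [detv_eq_cp_dot]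
    simp only [Matrix.mulVec, dotProduct, Fin.sum_univ_three, Matrix.of_apply,
      Matrix.cons_val_zero, Matrix.cons_val_one, Matrix.head_cons, Matrix.cons_val_two,
      Matrix.tail_cons, Pi.zero_apply] at h
    linear_combination h
  refine ⟨T.mulVec X', fun hX0 => hX'ne ?_, ?_, ?_, ?_⟩
  · rw [← hSmul X', hX0, Matrix.mulVec_zero]
  · rw [collin_iff]
    have h := detv_mulVec T (S.mulVec Q12) (S.mulVec Q21) X'
    rw [hTmul Q12, hTmul Q21, hd1, mul_zero] at h
    exact h
  · rw [collin_iff]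
    have h := detv_mulVec T (S.mulVec Q13) (S.mulVec Q31) X'
    rw [hTmul Q13, hTmul Q31, hd2, mul_zero] at h
    exact h
  · rw [collin_iff]
    have h := detv_mulVec T (S.mulVec Q23) (S.mulVec Q32) X'
    rw [hTmul Q23, hTmul Q32, hd3, mul_zero] at h
    exact h
end

section
/- If two triangles A₁A₂A₃ and B₁B₂B₃ in the real projective plane are perspective from a line s (the three points A_kA_j ∩ B_kB_j lie on s), and C_k is defined as the intersection of lines A_iB_j and A_jB_i for each permutation (i,j,k) of (1,2,3), then the triangle C₁C₂C₃ is perspective to A₁A₂A₃ from the line s; that is, for each k, the intersection point of lines A_iA_j and C_iC_j lies on s. -/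
/-- A point with homogeneous coordinates `X` lies on the line with
homogeneous dual coordinates `s`. -/
def OnLine (s X : Fin 3 → ℝ) : Prop := dotProduct s X = 0

private lemma li_iff_not_collin (u v w : Fin 3 → ℝ) :
    LinearIndependent ℝ ![u, v, w] ↔ ¬ collin u v w := by
  have h := Matrix.linearIndependent_rows_iff_isUnit (K := ℝ) (A := Matrix.of ![u, v, w])
  rw [Matrix.isUnit_iff_isUnit_det, isUnit_iff_ne_zero] at h
  exact h

private lemma detv_s4 (u v w : Fin 3 → ℝ) :
    (Matrix.of ![u, v, w]).det =
      u 0 * (v 1 * w 2 - v 2 * w 1) - u 1 * (v 0 * w 2 - v 2 * w 0)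
        + u 2 * (v 0 * w 1 - v 1 * w 0) := by
  rw [Matrix.det_fin_three]
  simp only [Matrix.of_apply, Matrix.cons_val_zero, Matrix.cons_val_one, Matrix.cons_val_two,
    Matrix.cons_val_succ, Matrix.head_cons, Matrix.vecTail, Matrix.vecHead, Function.comp]
  ring

private lemma pair_span {u v w : Fin 3 → ℝ} (h2 : LinearIndependent ℝ ![u, v])
    (h : collin u v w) : ∃ a b : ℝ, w = a • u + b • v := by
  have hdep : ¬ LinearIndependent ℝ ![u, v, w] := fun hli => (li_iff_not_collin u v w).mp hli h
  have hsnoc : (Fin.snoc ![u, v] w : Fin 3 → Fin 3 → ℝ) = ![u, v, w] := by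
    funext i; fin_cases i <;> rfl
  rw [← hsnoc, linearIndependent_fin_snoc] at hdep
  have hmem : w ∈ Submodule.span ℝ (Set.range ![u, v]) := by
    by_contra hc; exact hdep ⟨h2, hc⟩
  have hr : Set.range ![u, v] = {u, v} := by
    ext x
    constructor
    · rintro ⟨i, rfl⟩; fin_cases i <;> simp
    · rintro (rfl | rfl)
      · exact ⟨0, rfl⟩
      · exact ⟨1, rfl⟩
  rw [hr, Submodule.mem_span_pair] at hmem
  obtain ⟨a, b, hab⟩ := hmem
  exact ⟨a, b, hab.symm⟩

private lemma det_zero_of_perp {s u v w : Fin 3 → ℝ} (hs : s ≠ 0)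
    (h1 : dotProduct s u = 0) (h2 : dotProduct s v = 0)
    (h3 : dotProduct s w = 0) : collin u v w := by
  by_contra hd
  have hunit : IsUnit (Matrix.of ![u, v, w]) :=
    (Matrix.isUnit_iff_isUnit_det _).mpr (isUnit_iff_ne_zero.mpr hd)
  have hinj := Matrix.mulVec_injective_iff_isUnit.mpr hunit
  apply hs
  have h0 : Matrix.mulVec (Matrix.of ![u, v, w]) s = Matrix.mulVec (Matrix.of ![u, v, w]) 0 := by
    rw [Matrix.mulVec_zero]
    funext i
    fin_cases i
    · simpa [Matrix.mulVec, dotProduct_comm] using h1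
    · simpa [Matrix.mulVec, dotProduct_comm] using h2
    · simpa [Matrix.mulVec, dotProduct_comm] using h3
  exact hinj h0

private lemma solve2 {x y p q : ℝ} (h : x * p + y * q = 0) (hpq : ¬ (p = 0 ∧ q = 0)) :
    ∃ t : ℝ, x = t * q ∧ y = -(t * p) := by
  by_cases hq : q = 0
  · have hp : p ≠ 0 := fun hp => hpq ⟨hp, hq⟩
    have hx : x = 0 := by
      have hxp : x * p = 0 := by rw [hq] at h; linarith
      exact (mul_eq_zero.mp hxp).resolve_right hp
    refine ⟨-(y / p), ?_, ?_⟩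
    · rw [hq]; simp [hx]
    · field_simp
  · refine ⟨x / q, ?_, ?_⟩
    · field_simp
    · field_simp
      nlinarith [h]

private lemma rep {u v w z X : Fin 3 → ℝ} (hX : X ≠ 0) (hli : LinearIndependent ℝ ![u, v])
    (h1 : collin u v X) (h2 : collin w z X)
    (hpq : ¬ (collin w z u ∧ collin w z v)) :
    ∃ t : ℝ, t ≠ 0 ∧
      X = (t * (Matrix.of ![w, z, v]).det) • u - (t * (Matrix.of ![w, z, u]).det) • v := by
  obtain ⟨a, b, hab⟩ := pair_span hli h1
  have h2' : (Matrix.of ![w, z, a • u + b • v]).det = 0 := by rw [← hab]; exact h2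
  rw [detv_s4] at h2'
  have hrel : a * (Matrix.of ![w, z, u]).det + b * (Matrix.of ![w, z, v]).det = 0 := by
    rw [detv_s4, detv_s4]
    simp only [Pi.add_apply, Pi.smul_apply, smul_eq_mul] at h2'
    linear_combination h2'
  have hpq' : ¬ ((Matrix.of ![w, z, u]).det = 0 ∧ (Matrix.of ![w, z, v]).det = 0) := hpq
  obtain ⟨t, hta, htb⟩ := solve2 hrel hpq'
  refine ⟨t, ?_, ?_⟩
  · rintro rfl
    simp only [zero_mul, neg_zero] at hta htb
    apply hX
    rw [hab, hta, htb]
    simp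
  · rw [hab, hta, htb]
    funext i
    simp only [Pi.add_apply, Pi.sub_apply, Pi.smul_apply, smul_eq_mul]
    ring

/-- **Dual generalized Desargues theorem.**  If triangles `A₁A₂A₃` and
`B₁B₂B₃` are perspective from a line `s` (the intersection points
`L_k = A_kA_j ∩ B_kB_j` of corresponding sides lie on `s`), and
`C_k = A_iB_j ∩ A_jB_i`, then `C₁C₂C₃` is perspective to `A₁A₂A₃` from `s`:
for each `k`, the intersection of `A_iA_j` with `C_iC_j` lies on `s`. -/
theorem dual_generalized_desargues
    (s A1 A2 A3 B1 B2 B3 L1 L2 L3 C1 C2 C3 : Fin 3 → ℝ)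
    (hs : s ≠ 0)
    (hA1 : A1 ≠ 0) (hA2 : A2 ≠ 0) (hA3 : A3 ≠ 0)
    (hB1 : B1 ≠ 0) (hB2 : B2 ≠ 0) (hB3 : B3 ≠ 0)
    (hAnd : ¬ collin A1 A2 A3) (hBnd : ¬ collin B1 B2 B3)
    (hL1 : IsInter A2 A3 B2 B3 L1) (hL1s : OnLine s L1)
    (hL2 : IsInter A1 A3 B1 B3 L2) (hL2s : OnLine s L2)
    (hL3 : IsInter A1 A2 B1 B2 L3) (hL3s : OnLine s L3)
    (hC1 : IsInter A2 B3 A3 B2 C1)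
    (hC2 : IsInter A1 B3 A3 B1 C2)
    (hC3 : IsInter A1 B2 A2 B1 C3) :
    (∃ M : Fin 3 → ℝ, M ≠ 0 ∧ collin A2 A3 M ∧ collin C2 C3 M ∧ OnLine s M) ∧
    (∃ M : Fin 3 → ℝ, M ≠ 0 ∧ collin A1 A3 M ∧ collin C1 C3 M ∧ OnLine s M) ∧
    (∃ M : Fin 3 → ℝ, M ≠ 0 ∧ collin A1 A2 M ∧ collin C1 C2 M ∧ OnLine s M) := by
  classical
  have hdM : (Matrix.of ![A1, A2, A3]).det ≠ 0 := hAnd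
  set Mm : Matrix (Fin 3) (Fin 3) ℝ := Matrix.of ![A1, A2, A3] with hMmdef
  have hunit : IsUnit Mm := (Matrix.isUnit_iff_isUnit_det _).mpr (isUnit_iff_ne_zero.mpr hdM)
  have hsurj : Function.Surjective Mm.vecMul := Matrix.vecMul_surjective_iff_isUnit.mpr hunit
  have hvinj : Function.Injective Mm.vecMul := Matrix.vecMul_injective_iff_isUnit.mpr hunit
  have hminj : Function.Injective Mm.mulVec := Matrix.mulVec_injective_iff_isUnit.mpr hunit
  obtain ⟨b1, hb1vp⟩ := hsurj B1
  have hb1v : Matrix.vecMul b1 Mm = B1 := hb1vp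
  obtain ⟨b2, hb2vp⟩ := hsurj B2
  have hb2v : Matrix.vecMul b2 Mm = B2 := hb2vp
  obtain ⟨b3, hb3vp⟩ := hsurj B3
  have hb3v : Matrix.vecMul b3 Mm = B3 := hb3vp
  obtain ⟨l1, hl1vp⟩ := hsurj L1
  have hl1v : Matrix.vecMul l1 Mm = L1 := hl1vp
  obtain ⟨l2, hl2vp⟩ := hsurj L2
  have hl2v : Matrix.vecMul l2 Mm = L2 := hl2vp
  obtain ⟨l3, hl3vp⟩ := hsurj L3
  have hl3v : Matrix.vecMul l3 Mm = L3 := hl3vp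
  obtain ⟨c1, hc1vp⟩ := hsurj C1
  have hc1v : Matrix.vecMul c1 Mm = C1 := hc1vp
  obtain ⟨c2, hc2vp⟩ := hsurj C2
  have hc2v : Matrix.vecMul c2 Mm = C2 := hc2vp
  obtain ⟨c3, hc3vp⟩ := hsurj C3
  have hc3v : Matrix.vecMul c3 Mm = C3 := hc3vp
  set a1 : Fin 3 → ℝ := ![1, 0, 0] with ha1def
  set a2 : Fin 3 → ℝ := ![0, 1, 0] with ha2def
  set a3 : Fin 3 → ℝ := ![0, 0, 1] with ha3def
  have ha1 : Mm.vecMul a1 = A1 := by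
    funext j
    simp [ha1def, hMmdef, Matrix.vecMul, dotProduct, Fin.sum_univ_three]
  have ha2 : Mm.vecMul a2 = A2 := by
    funext j
    simp [ha2def, hMmdef, Matrix.vecMul, dotProduct, Fin.sum_univ_three]
  have ha3 : Mm.vecMul a3 = A3 := by
    funext j
    simp [ha3def, hMmdef, Matrix.vecMul, dotProduct, Fin.sum_univ_three]
  have hmulM : ∀ x y z : Fin 3 → ℝ,
      Matrix.of ![Mm.vecMul x, Mm.vecMul y, Mm.vecMul z] = Matrix.of ![x, y, z] * Mm := by
    intro x y z
    ext i j
    fin_cases i <;>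
      simp [Matrix.mul_apply, Matrix.vecMul, dotProduct, Fin.sum_univ_three]
  have Tcollin : ∀ x y z : Fin 3 → ℝ,
      collin (Mm.vecMul x) (Mm.vecMul y) (Mm.vecMul z) ↔ collin x y z := by
    intro x y z
    have hd : (Matrix.of ![Mm.vecMul x, Mm.vecMul y, Mm.vecMul z]).det
        = (Matrix.of ![x, y, z]).det * Mm.det := by rw [hmulM, Matrix.det_mul]
    constructor
    · intro hcoll
      have h0 : (Matrix.of ![x, y, z]).det * Mm.det = 0 := by rw [← hd]; exact hcoll
      exact (mul_eq_zero.mp h0).resolve_right hdM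
    · intro hc
      show (Matrix.of ![Mm.vecMul x, Mm.vecMul y, Mm.vecMul z]).det = 0
      rw [hd]
      have hc' : (Matrix.of ![x, y, z]).det = 0 := hc
      rw [hc', zero_mul]
  have Tne : ∀ x : Fin 3 → ℝ, Mm.vecMul x ≠ 0 → x ≠ 0 := by
    intro x hx h0
    apply hx
    rw [h0]
    exact Matrix.zero_vecMul Mm
  have Tli : ∀ x y : Fin 3 → ℝ,
      LinearIndependent ℝ ![Mm.vecMul x, Mm.vecMul y] → LinearIndependent ℝ ![x, y] := by
    intro x y h
    have hker : LinearMap.ker Mm.vecMulLinear = ⊥ := LinearMap.ker_eq_bot.mpr hvinj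
    have hcomp : (![Mm.vecMul x, Mm.vecMul y] : Fin 2 → Fin 3 → ℝ)
        = Mm.vecMulLinear ∘ ![x, y] := by
      funext i; fin_cases i <;> rfl
    rw [hcomp] at h
    exact (LinearMap.linearIndependent_iff _ hker).mp h
  set s' : Fin 3 → ℝ := Mm.mulVec s with hs'def
  have hs'ne : s' ≠ 0 := by
    intro h
    apply hs
    apply hminj
    rw [Matrix.mulVec_zero, ← hs'def]
    exact h
  have Ton : ∀ x : Fin 3 → ℝ, OnLine s (Mm.vecMul x) → dotProduct s' x = 0 := by
    intro x h
    have key : dotProduct x s' = dotProduct (Mm.vecMul x) s := by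
      rw [hs'def]
      exact Matrix.dotProduct_mulVec x Mm s
    rw [dotProduct_comm, key, dotProduct_comm]
    exact h
  have tl1ne : l1 ≠ 0 := Tne l1 (by rw [hl1v]; exact hL1.1)
  have tl1A : collin a2 a3 l1 := (Tcollin _ _ _).mp
    (by rw [ha2, ha3, hl1v]; exact hL1.2.2.2.1)
  have tl1B : collin b2 b3 l1 := (Tcollin _ _ _).mp
    (by rw [hb2v, hb3v, hl1v]; exact hL1.2.2.2.2.1)
  have tl1cl : ¬ (collin a2 a3 b2 ∧ collin a2 a3 b3) := by
    rintro ⟨hx, hy⟩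
    exact hL1.2.2.2.2.2 ⟨by rw [← ha2, ← ha3, ← hb2v]; exact (Tcollin _ _ _).mpr hx,
      by rw [← ha2, ← ha3, ← hb3v]; exact (Tcollin _ _ _).mpr hy⟩
  have tl1s : dotProduct s' l1 = 0 := Ton l1 (by rw [hl1v]; exact hL1s)
  have tl2ne : l2 ≠ 0 := Tne l2 (by rw [hl2v]; exact hL2.1)
  have tl2A : collin a1 a3 l2 := (Tcollin _ _ _).mp
    (by rw [ha1, ha3, hl2v]; exact hL2.2.2.2.1)
  have tl2B : collin b1 b3 l2 := (Tcollin _ _ _).mp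
    (by rw [hb1v, hb3v, hl2v]; exact hL2.2.2.2.2.1)
  have tl2cl : ¬ (collin a1 a3 b1 ∧ collin a1 a3 b3) := by
    rintro ⟨hx, hy⟩
    exact hL2.2.2.2.2.2 ⟨by rw [← ha1, ← ha3, ← hb1v]; exact (Tcollin _ _ _).mpr hx,
      by rw [← ha1, ← ha3, ← hb3v]; exact (Tcollin _ _ _).mpr hy⟩
  have tl2s : dotProduct s' l2 = 0 := Ton l2 (by rw [hl2v]; exact hL2s)
  have tl3ne : l3 ≠ 0 := Tne l3 (by rw [hl3v]; exact hL3.1)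
  have tl3A : collin a1 a2 l3 := (Tcollin _ _ _).mp
    (by rw [ha1, ha2, hl3v]; exact hL3.2.2.2.1)
  have tl3B : collin b1 b2 l3 := (Tcollin _ _ _).mp
    (by rw [hb1v, hb2v, hl3v]; exact hL3.2.2.2.2.1)
  have tl3cl : ¬ (collin a1 a2 b1 ∧ collin a1 a2 b2) := by
    rintro ⟨hx, hy⟩
    exact hL3.2.2.2.2.2 ⟨by rw [← ha1, ← ha2, ← hb1v]; exact (Tcollin _ _ _).mpr hx,
      by rw [← ha1, ← ha2, ← hb2v]; exact (Tcollin _ _ _).mpr hy⟩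
  have tl3s : dotProduct s' l3 = 0 := Ton l3 (by rw [hl3v]; exact hL3s)
  have tc1ne : c1 ≠ 0 := Tne c1 (by rw [hc1v]; exact hC1.1)
  have tc1li1 : LinearIndependent ℝ ![a2, b3] := Tli _ _
    (by rw [ha2, hb3v]; exact hC1.2.1)
  have tc1li2 : LinearIndependent ℝ ![a3, b2] := Tli _ _
    (by rw [ha3, hb2v]; exact hC1.2.2.1)
  have tc1a : collin a2 b3 c1 := (Tcollin _ _ _).mp
    (by rw [ha2, hb3v, hc1v]; exact hC1.2.2.2.1)
  have tc1b : collin a3 b2 c1 := (Tcollin _ _ _).mp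
    (by rw [ha3, hb2v, hc1v]; exact hC1.2.2.2.2.1)
  have tc1cl : ¬ (collin a2 b3 a3 ∧ collin a2 b3 b2) := by
    rintro ⟨hx, hy⟩
    exact hC1.2.2.2.2.2 ⟨by rw [← ha2, ← hb3v, ← ha3]; exact (Tcollin _ _ _).mpr hx,
      by rw [← ha2, ← hb3v, ← hb2v]; exact (Tcollin _ _ _).mpr hy⟩
  have tc2ne : c2 ≠ 0 := Tne c2 (by rw [hc2v]; exact hC2.1)
  have tc2li1 : LinearIndependent ℝ ![a1, b3] := Tli _ _
    (by rw [ha1, hb3v]; exact hC2.2.1)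
  have tc2li2 : LinearIndependent ℝ ![a3, b1] := Tli _ _
    (by rw [ha3, hb1v]; exact hC2.2.2.1)
  have tc2a : collin a1 b3 c2 := (Tcollin _ _ _).mp
    (by rw [ha1, hb3v, hc2v]; exact hC2.2.2.2.1)
  have tc2b : collin a3 b1 c2 := (Tcollin _ _ _).mp
    (by rw [ha3, hb1v, hc2v]; exact hC2.2.2.2.2.1)
  have tc2cl : ¬ (collin a1 b3 a3 ∧ collin a1 b3 b1) := by
    rintro ⟨hx, hy⟩
    exact hC2.2.2.2.2.2 ⟨by rw [← ha1, ← hb3v, ← ha3]; exact (Tcollin _ _ _).mpr hx,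
      by rw [← ha1, ← hb3v, ← hb1v]; exact (Tcollin _ _ _).mpr hy⟩
  have tc3ne : c3 ≠ 0 := Tne c3 (by rw [hc3v]; exact hC3.1)
  have tc3li1 : LinearIndependent ℝ ![a1, b2] := Tli _ _
    (by rw [ha1, hb2v]; exact hC3.2.1)
  have tc3li2 : LinearIndependent ℝ ![a2, b1] := Tli _ _
    (by rw [ha2, hb1v]; exact hC3.2.2.1)
  have tc3a : collin a1 b2 c3 := (Tcollin _ _ _).mp
    (by rw [ha1, hb2v, hc3v]; exact hC3.2.2.2.1)
  have tc3b : collin a2 b1 c3 := (Tcollin _ _ _).mp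
    (by rw [ha2, hb1v, hc3v]; exact hC3.2.2.2.2.1)
  have tc3cl : ¬ (collin a1 b2 a2 ∧ collin a1 b2 b1) := by
    rintro ⟨hx, hy⟩
    exact hC3.2.2.2.2.2 ⟨by rw [← ha1, ← hb2v, ← ha2]; exact (Tcollin _ _ _).mpr hx,
      by rw [← ha1, ← hb2v, ← hb1v]; exact (Tcollin _ _ _).mpr hy⟩
  have tB : ¬ collin b1 b2 b3 := fun h =>
    hBnd (by rw [← hb1v, ← hb2v, ← hb3v]; exact (Tcollin _ _ _).mpr h)
  have hliB : LinearIndependent ℝ ![b1, b2, b3] := (li_iff_not_collin _ _ _).mpr tB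
  have hliB23 : LinearIndependent ℝ ![b2, b3] := by
    have h := hliB.comp ![1, 2] (by decide)
    have e : (![b1, b2, b3] ∘ ![1, 2] : Fin 2 → Fin 3 → ℝ) = ![b2, b3] := by
      funext i; fin_cases i <;> rfl
    rwa [e] at h
  have hliB13 : LinearIndependent ℝ ![b1, b3] := by
    have h := hliB.comp ![0, 2] (by decide)
    have e : (![b1, b2, b3] ∘ ![0, 2] : Fin 2 → Fin 3 → ℝ) = ![b1, b3] := by
      funext i; fin_cases i <;> rfl
    rwa [e] at h
  have hliB12 : LinearIndependent ℝ ![b1, b2] := by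
    have h := hliB.comp ![0, 1] (by decide)
    have e : (![b1, b2, b3] ∘ ![0, 1] : Fin 2 → Fin 3 → ℝ) = ![b1, b2] := by
      funext i; fin_cases i <;> rfl
    rwa [e] at h
  obtain ⟨t1, ht1, hl1r⟩ := rep tl1ne hliB23 tl1B tl1A tl1cl
  obtain ⟨t2, ht2, hl2r⟩ := rep tl2ne hliB13 tl2B tl2A tl2cl
  obtain ⟨t3, ht3, hl3r⟩ := rep tl3ne hliB12 tl3B tl3A tl3cl

  have dl1a : (Matrix.of ![a2, a3, b3]).det = b3 0 := by rw [detv_s4]; simp [ha2def, ha3def]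
  have dl1b : (Matrix.of ![a2, a3, b2]).det = b2 0 := by rw [detv_s4]; simp [ha2def, ha3def]
  have dl2a : (Matrix.of ![a1, a3, b3]).det = -(b3 1) := by rw [detv_s4]; simp [ha1def, ha3def]
  have dl2b : (Matrix.of ![a1, a3, b1]).det = -(b1 1) := by rw [detv_s4]; simp [ha1def, ha3def]
  have dl3a : (Matrix.of ![a1, a2, b2]).det = b2 2 := by rw [detv_s4]; simp [ha1def, ha2def]
  have dl3b : (Matrix.of ![a1, a2, b1]).det = b1 2 := by rw [detv_s4]; simp [ha1def, ha2def]
  have dc1a : (Matrix.of ![a3, b2, b3]).det = b2 0 * b3 1 - b2 1 * b3 0 := by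
    rw [detv_s4]; simp [ha3def]
  have dc1b : (Matrix.of ![a3, b2, a2]).det = b2 0 := by rw [detv_s4]; simp [ha3def, ha2def]
  have dc2a : (Matrix.of ![a3, b1, b3]).det = b1 0 * b3 1 - b1 1 * b3 0 := by
    rw [detv_s4]; simp [ha3def]
  have dc2b : (Matrix.of ![a3, b1, a1]).det = -(b1 1) := by rw [detv_s4]; simp [ha3def, ha1def]
  have dc3a : (Matrix.of ![a2, b1, b2]).det = -(b1 0 * b2 2 - b1 2 * b2 0) := by
    rw [detv_s4]; simp [ha2def]
  have dc3b : (Matrix.of ![a2, b1, a1]).det = b1 2 := by rw [detv_s4]; simp [ha2def, ha1def]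
  have dt1a : (Matrix.of ![a2, b3, a3]).det = -(b3 0) := by rw [detv_s4]; simp [ha2def, ha3def]
  have dt1b : (Matrix.of ![a2, b3, b2]).det = -(b3 0 * b2 2 - b3 2 * b2 0) := by
    rw [detv_s4]; simp [ha2def]
  have dt2a : (Matrix.of ![a1, b3, a3]).det = b3 1 := by rw [detv_s4]; simp [ha1def, ha3def]
  have dt2b : (Matrix.of ![a1, b3, b1]).det = b3 1 * b1 2 - b3 2 * b1 1 := by
    rw [detv_s4]; simp [ha1def]
  have dt3a : (Matrix.of ![a1, b2, a2]).det = -(b2 2) := by rw [detv_s4]; simp [ha1def, ha2def]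
  have dt3b : (Matrix.of ![a1, b2, b1]).det = b2 1 * b1 2 - b2 2 * b1 1 := by
    rw [detv_s4]; simp [ha1def]
  have hpq1 : ¬ (collin a3 b2 a2 ∧ collin a3 b2 b3) := by
    rintro ⟨hx, hy⟩
    have hx' : (Matrix.of ![a3, b2, a2]).det = 0 := hx
    have hy' : (Matrix.of ![a3, b2, b3]).det = 0 := hy
    rw [dc1b] at hx'
    rw [dc1a] at hy'
    have hz : b2 1 * b3 0 = 0 := by linear_combination b3 1 * hx' - hy'
    rcases mul_eq_zero.mp hz with h21 | h30
    · by_cases h22 : b2 2 = 0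
      · have hb2z : b2 = 0 := by
          funext i; fin_cases i
          · exact hx'
          · exact h21
          · exact h22
        exact (tc1li2.ne_zero 1) (by simpa using hb2z)
      · exact (linearIndependent_fin2.mp tc1li2).2 (b2 2)⁻¹ (by
          simp only [Matrix.cons_val_one, Matrix.head_cons, Matrix.cons_val_zero]
          funext i; fin_cases i
          · simp [hx', ha3def]
          · simp [h21, ha3def]
          · simp [ha3def]; exact inv_mul_cancel₀ h22)
    · apply tc1cl
      constructor
      · show (Matrix.of ![a2, b3, a3]).det = 0
        rw [dt1a, h30, neg_zero]
      · show (Matrix.of ![a2, b3, b2]).det = 0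
        rw [dt1b, h30, hx']; ring
  have hpq2 : ¬ (collin a3 b1 a1 ∧ collin a3 b1 b3) := by
    rintro ⟨hx, hy⟩
    have hx' : (Matrix.of ![a3, b1, a1]).det = 0 := hx
    have hy' : (Matrix.of ![a3, b1, b3]).det = 0 := hy
    rw [dc2b] at hx'
    rw [dc2a] at hy'
    have hb11 : b1 1 = 0 := neg_eq_zero.mp hx'
    have hz : b1 0 * b3 1 = 0 := by linear_combination hy' + b3 0 * hb11
    rcases mul_eq_zero.mp hz with h10 | h31
    · by_cases h12 : b1 2 = 0
      · have hb1z : b1 = 0 := by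
          funext i; fin_cases i
          · exact h10
          · exact hb11
          · exact h12
        exact (tc2li2.ne_zero 1) (by simpa using hb1z)
      · exact (linearIndependent_fin2.mp tc2li2).2 (b1 2)⁻¹ (by
          simp only [Matrix.cons_val_one, Matrix.head_cons, Matrix.cons_val_zero]
          funext i; fin_cases i
          · simp [h10, ha3def]
          · simp [hb11, ha3def]
          · simp [ha3def]; exact inv_mul_cancel₀ h12)
    · apply tc2cl
      constructor
      · show (Matrix.of ![a1, b3, a3]).det = 0
        rw [dt2a]; exact h31
      · show (Matrix.of ![a1, b3, b1]).det = 0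
        rw [dt2b, h31, hb11]; ring
  have hpq3 : ¬ (collin a2 b1 a1 ∧ collin a2 b1 b2) := by
    rintro ⟨hx, hy⟩
    have hx' : (Matrix.of ![a2, b1, a1]).det = 0 := hx
    have hy' : (Matrix.of ![a2, b1, b2]).det = 0 := hy
    rw [dc3b] at hx'
    rw [dc3a] at hy'
    have hz : b1 0 * b2 2 = 0 := by linear_combination -hy' + b2 0 * hx'
    rcases mul_eq_zero.mp hz with h10 | h22
    · by_cases h11 : b1 1 = 0
      · have hb1z : b1 = 0 := by
          funext i; fin_cases i
          · exact h10
          · exact h11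
          · exact hx'
        exact (tc3li2.ne_zero 1) (by simpa using hb1z)
      · exact (linearIndependent_fin2.mp tc3li2).2 (b1 1)⁻¹ (by
          simp only [Matrix.cons_val_one, Matrix.head_cons, Matrix.cons_val_zero]
          funext i; fin_cases i
          · simp [h10, ha2def]
          · simp [ha2def]; exact inv_mul_cancel₀ h11
          · simp [hx', ha2def])
    · apply tc3cl
      constructor
      · show (Matrix.of ![a1, b2, a2]).det = 0
        rw [dt3a, h22, neg_zero]
      · show (Matrix.of ![a1, b2, b1]).det = 0
        rw [dt3b, hx', h22]; ring
  obtain ⟨u1, hu1, hc1r⟩ := rep tc1ne tc1li1 tc1a tc1b hpq1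
  obtain ⟨u2, hu2, hc2r⟩ := rep tc2ne tc2li1 tc2a tc2b hpq2
  obtain ⟨u3, hu3, hc3r⟩ := rep tc3ne tc3li1 tc3a tc3b hpq3
  rw [dl1a, dl1b] at hl1r
  rw [dl2a, dl2b] at hl2r
  rw [dl3a, dl3b] at hl3r
  rw [dc1a, dc1b] at hc1r
  rw [dc2a, dc2b] at hc2r
  rw [dc3a, dc3b] at hc3r
  have hdet : (Matrix.of ![l1, l2, l3]).det = 0 := det_zero_of_perp hs'ne tl1s tl2s tl3s
  rw [hl1r, hl2r, hl3r, detv_s4] at hdet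
  simp only [Pi.sub_apply, Pi.smul_apply, smul_eq_mul] at hdet
  have hdetB : b1 0 * (b2 1 * b3 2 - b2 2 * b3 1) - b1 1 * (b2 0 * b3 2 - b2 2 * b3 0)
      + b1 2 * (b2 0 * b3 1 - b2 1 * b3 0) ≠ 0 := by
    intro hcontra
    apply tB
    show (Matrix.of ![b1, b2, b3]).det = 0
    rw [detv_s4]
    exact hcontra
  have h5 : t1 * t2 * t3 * (b1 0 * (b2 1 * b3 2 - b2 2 * b3 1)
      - b1 1 * (b2 0 * b3 2 - b2 2 * b3 0) + b1 2 * (b2 0 * b3 1 - b2 1 * b3 0))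
      * (b1 2 * b2 0 * b3 1 - b1 1 * b2 2 * b3 0) = 0 := by
    linear_combination -hdet
  have hcore : b1 2 * b2 0 * b3 1 - b1 1 * b2 2 * b3 0 = 0 := by
    by_contra hc
    exact (mul_ne_zero (mul_ne_zero (mul_ne_zero (mul_ne_zero ht1 ht2) ht3) hdetB) hc) h5
  have G1 : collin c2 c3 l1 := by
    show (Matrix.of ![c2, c3, l1]).det = 0
    rw [hc2r, hc3r, hl1r, detv_s4]
    simp only [Pi.sub_apply, Pi.smul_apply, smul_eq_mul, ha1def, ha2def, ha3def,
      Matrix.cons_val_zero, Matrix.cons_val_one, Matrix.cons_val_two, Matrix.head_cons,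
      Matrix.vecHead, Matrix.vecTail, Matrix.cons_val_succ, Function.comp_apply]
    linear_combination (t1 * u2 * u3 * (b1 0 * b2 1 * b3 2 - b1 0 * b2 2 * b3 1)) * hcore
  have G2 : collin c1 c3 l2 := by
    show (Matrix.of ![c1, c3, l2]).det = 0
    rw [hc1r, hc3r, hl2r, detv_s4]
    simp only [Pi.sub_apply, Pi.smul_apply, smul_eq_mul, ha1def, ha2def, ha3def,
      Matrix.cons_val_zero, Matrix.cons_val_one, Matrix.cons_val_two, Matrix.head_cons,
      Matrix.vecHead, Matrix.vecTail, Matrix.cons_val_succ, Function.comp_apply]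
    linear_combination (t2 * u1 * u3 * (b1 0 * b2 1 * b3 2 - b1 2 * b2 1 * b3 0)) * hcore
  have G3 : collin c1 c2 l3 := by
    show (Matrix.of ![c1, c2, l3]).det = 0
    rw [hc1r, hc2r, hl3r, detv_s4]
    simp only [Pi.sub_apply, Pi.smul_apply, smul_eq_mul, ha1def, ha2def, ha3def,
      Matrix.cons_val_zero, Matrix.cons_val_one, Matrix.cons_val_two, Matrix.head_cons,
      Matrix.vecHead, Matrix.vecTail, Matrix.cons_val_succ, Function.comp_apply]
    linear_combination (t3 * u1 * u2 * (b1 0 * b2 1 * b3 2 - b1 1 * b2 0 * b3 2)) * hcore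
  have hG1 : collin C2 C3 L1 := by
    rw [← hc2v, ← hc3v, ← hl1v]
    exact (Tcollin _ _ _).mpr G1
  have hG2 : collin C1 C3 L2 := by
    rw [← hc1v, ← hc3v, ← hl2v]
    exact (Tcollin _ _ _).mpr G2
  have hG3 : collin C1 C2 L3 := by
    rw [← hc1v, ← hc2v, ← hl3v]
    exact (Tcollin _ _ _).mpr G3
  exact ⟨⟨L1, hL1.1, hL1.2.2.2.1, hG1, hL1s⟩,
         ⟨L2, hL2.1, hL2.2.2.2.1, hG2, hL2s⟩,
         ⟨L3, hL3.1, hL3.2.2.2.1, hG3, hL3s⟩⟩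
end
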